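/- Let (A, B) be a proper W-join of a claw-free graph G, and let G' be obtained from G by removing A and B and adding vertices a, a', b, b', where a, a' are adjacent to all of N(A) \ B, b, b' are adjacent to all of N(B) \ A, and the edges aa', bb', ab are added. Then G' is claw-free. -/

import Mathlib

/-- A graph is claw-free if no vertex has three pairwise nonadjacent neighbors. -/
def ClawFree {V : Type*} (G : SimpleGraph V) : Prop :=
  ∀ a b c d : V, G.Adj a b → G.Adj a c → G.Adj a d → b ≠ c → b ≠ d → c ≠ d →
    G.Adj b c ∨ G.Adj b d ∨ G.Adj c d

/-- The graph obtained from `G` by removing the W-join sides `A`, `B` and adding four new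
vertices `a, a', b, b'` (encoded as `Fin 4`: `0 ↦ a`, `1 ↦ a'`, `2 ↦ b`, `3 ↦ b'`), where
`a, a'` are joined to `N(A) \ B`, `b, b'` are joined to `N(B) \ A`, and the edges
`aa'`, `bb'`, `ab` are added. -/
def reducedWJoin {V : Type*} (G : SimpleGraph V) (A B : Set V) :
    SimpleGraph ({v : V // v ∉ A ∧ v ∉ B} ⊕ Fin 4) :=
  SimpleGraph.fromRel (fun x y =>
    match x, y with
    | Sum.inl u, Sum.inl v => G.Adj u v
    | Sum.inl u, Sum.inr i =>
        ((i = 0 ∨ i = 1) ∧ ∃ x ∈ A, G.Adj (u : V) x) ∨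
        ((i = 2 ∨ i = 3) ∧ ∃ x ∈ B, G.Adj (u : V) x)
    | Sum.inr _, Sum.inl _ => False
    | Sum.inr i, Sum.inr j => (i = 0 ∧ j = 1) ∨ (i = 2 ∧ j = 3) ∨ (i = 0 ∧ j = 2))

/-- The adjacency relation among the four new vertices. -/
abbrev rwjPair (i j : Fin 4) : Prop :=
  (i = 0 ∧ j = 1) ∨ (i = 2 ∧ j = 3) ∨ (i = 0 ∧ j = 2) ∨
  (j = 0 ∧ i = 1) ∨ (j = 2 ∧ i = 3) ∨ (j = 0 ∧ i = 2)

instance (i j : Fin 4) : Decidable (rwjPair i j) := by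
  unfold rwjPair; infer_instance

section helpers

variable {V : Type*} {G : SimpleGraph V} {A B : Set V}

lemma rwj_inl_inl {u v : {v : V // v ∉ A ∧ v ∉ B}} :
    (reducedWJoin G A B).Adj (Sum.inl u) (Sum.inl v) ↔ G.Adj u v := by
  simp only [reducedWJoin, SimpleGraph.fromRel_adj]
  constructor
  · rintro ⟨-, h | h⟩
    · exact h
    · exact h.symm
  · intro h
    refine ⟨?_, Or.inl h⟩
    simp only [ne_eq, Sum.inl.injEq]
    intro he
    exact G.loopless.irrefl _ (by rw [he] at h; exact h)

lemma rwj_inl_inr {u : {v : V // v ∉ A ∧ v ∉ B}} {i : Fin 4} :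
    (reducedWJoin G A B).Adj (Sum.inl u) (Sum.inr i) ↔
      ((i = 0 ∨ i = 1) ∧ ∃ x ∈ A, G.Adj (u : V) x) ∨
      ((i = 2 ∨ i = 3) ∧ ∃ x ∈ B, G.Adj (u : V) x) := by
  simp [reducedWJoin, SimpleGraph.fromRel_adj]

lemma rwj_inr_inl {u : {v : V // v ∉ A ∧ v ∉ B}} {i : Fin 4} :
    (reducedWJoin G A B).Adj (Sum.inr i) (Sum.inl u) ↔
      ((i = 0 ∨ i = 1) ∧ ∃ x ∈ A, G.Adj (u : V) x) ∨
      ((i = 2 ∨ i = 3) ∧ ∃ x ∈ B, G.Adj (u : V) x) := by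
  rw [(reducedWJoin G A B).adj_comm]; exact rwj_inl_inr

lemma rwj_inr_inr {i j : Fin 4} :
    (reducedWJoin G A B).Adj (Sum.inr i : _ ⊕ Fin 4) (Sum.inr j) ↔ rwjPair i j := by
  simp only [reducedWJoin, SimpleGraph.fromRel_adj, ne_eq, Sum.inr.injEq, rwjPair]
  fin_cases i <;> fin_cases j <;> simp

end helpers

/-- If `(A, B)` is a proper W-join of a claw-free graph `G`, then the reduced graph `G'`
(removing `A`, `B` and adding `a, a', b, b'` as above) is claw-free. -/
theorem stmt13 {V : Type*} (G : SimpleGraph V) (A B : Set V)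
    (hdisj : Disjoint A B) (hAcl : G.IsClique A) (hBcl : G.IsClique B)
    (hhom : ∀ v : V, v ∉ A → v ∉ B →
      ((∀ a ∈ A, G.Adj v a) ∨ (∀ a ∈ A, ¬ G.Adj v a)) ∧
      ((∀ b ∈ B, G.Adj v b) ∨ (∀ b ∈ B, ¬ G.Adj v b)))
    (hsize : 2 ≤ A.ncard ∨ 2 ≤ B.ncard)
    (hA : ∀ a ∈ A, (∃ b ∈ B, G.Adj a b) ∧ (∃ b ∈ B, ¬ G.Adj a b))
    (hB : ∀ b ∈ B, (∃ a ∈ A, G.Adj a b) ∧ (∃ a ∈ A, ¬ G.Adj a b))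
    (hclaw : ClawFree G) :
    ClawFree (reducedWJoin G A B) := by
  -- decidable facts about the `Fin 4` gadget
  have hABf : ∀ m : Fin 4, (m = 0 ∨ m = 1) → (m = 2 ∨ m = 3) → False := by decide
  have Kcl : ∀ n : Fin 4, (n = 0 ∨ n = 1) ∨ (n = 2 ∨ n = 3) := by decide
  have Psame : ∀ k l : Fin 4, ¬k = l →
      ((k = 0 ∨ k = 1) ∧ (l = 0 ∨ l = 1)) ∨ ((k = 2 ∨ k = 3) ∧ (l = 2 ∨ l = 3)) →
      rwjPair k l := by decide
  have K3 : ∀ i k l : Fin 4, rwjPair i k → rwjPair i l → ¬k = l →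
      ((i = 0 ∨ i = 1) → (k = 0 ∨ k = 1) ∨ (l = 0 ∨ l = 1)) ∧
      ((i = 2 ∨ i = 3) → (k = 2 ∨ k = 3) ∨ (l = 2 ∨ l = 3)) := by decide
  have T : ∀ j k l : Fin 4, ¬j = k → ¬j = l → ¬k = l →
      rwjPair j k ∨ rwjPair j l ∨ rwjPair k l := by decide
  -- vertices with a neighbor in A (resp. B) are complete to A (resp. B)
  have cA : ∀ u : {v : V // v ∉ A ∧ v ∉ B},
      (∃ x ∈ A, G.Adj (u : V) x) → ∀ a ∈ A, G.Adj (u : V) a := by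
    rintro u ⟨x, hx, hux⟩ a ha
    rcases (hhom u u.2.1 u.2.2).1 with h | h
    · exact h a ha
    · exact absurd hux (h x hx)
  have cB : ∀ u : {v : V // v ∉ A ∧ v ∉ B},
      (∃ x ∈ B, G.Adj (u : V) x) → ∀ b ∈ B, G.Adj (u : V) b := by
    rintro u ⟨x, hx, hux⟩ b hb
    rcases (hhom u u.2.1 u.2.2).2 with h | h
    · exact h b hb
    · exact absurd hux (h x hx)
  have nes : ∀ {u v : {v : V // v ∉ A ∧ v ∉ B}}, ¬u = v → ¬(u : V) = v :=
    fun h hc => h (Subtype.ext hc)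
  -- claw-contradiction helpers
  have H5 : ∀ u v w y : {v : V // v ∉ A ∧ v ∉ B},
      G.Adj (u : V) v → G.Adj (u : V) w → G.Adj (u : V) y →
      ¬v = w → ¬v = y → ¬w = y →
      ¬G.Adj (v : V) w → ¬G.Adj (v : V) y → ¬G.Adj (w : V) y → False := by
    intro u v w y h1 h2 h3 n1 n2 n3 m1 m2 m3
    rcases hclaw u v w y h1 h2 h3 (nes n1) (nes n2) (nes n3) with h | h | h
    exacts [m1 h, m2 h, m3 h]
  have H1 : ∀ u v w : {v : V // v ∉ A ∧ v ∉ B},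
      (∃ x ∈ A, G.Adj (u : V) x) → (∃ x ∈ A, G.Adj (v : V) x) → (∃ x ∈ A, G.Adj (w : V) x) →
      ¬u = v → ¬u = w → ¬v = w →
      ¬G.Adj (u : V) v → ¬G.Adj (u : V) w → ¬G.Adj (v : V) w → False := by
    intro u v w hu hv hw n1 n2 n3 m1 m2 m3
    obtain ⟨a0, ha0, -⟩ := id hu
    rcases hclaw a0 u v w (cA u hu a0 ha0).symm (cA v hv a0 ha0).symm (cA w hw a0 ha0).symm
      (nes n1) (nes n2) (nes n3) with h | h | h
    exacts [m1 h, m2 h, m3 h]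
  have H1B : ∀ u v w : {v : V // v ∉ A ∧ v ∉ B},
      (∃ x ∈ B, G.Adj (u : V) x) → (∃ x ∈ B, G.Adj (v : V) x) → (∃ x ∈ B, G.Adj (w : V) x) →
      ¬u = v → ¬u = w → ¬v = w →
      ¬G.Adj (u : V) v → ¬G.Adj (u : V) w → ¬G.Adj (v : V) w → False := by
    intro u v w hu hv hw n1 n2 n3 m1 m2 m3
    obtain ⟨b0, hb0, -⟩ := id hu
    rcases hclaw b0 u v w (cB u hu b0 hb0).symm (cB v hv b0 hb0).symm (cB w hw b0 hb0).symm
      (nes n1) (nes n2) (nes n3) with h | h | h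
    exacts [m1 h, m2 h, m3 h]
  have H2 : ∀ u v : {v : V // v ∉ A ∧ v ∉ B},
      (∃ x ∈ A, G.Adj (u : V) x) → (∃ x ∈ A, G.Adj (v : V) x) →
      ¬(∃ x ∈ B, G.Adj (u : V) x) → ¬(∃ x ∈ B, G.Adj (v : V) x) →
      ¬u = v → ¬G.Adj (u : V) v → False := by
    intro u v hu hv hnbu hnbv n m
    obtain ⟨a0, ha0, -⟩ := id hu
    obtain ⟨b0, hb0, hab⟩ := (hA a0 ha0).1
    have e1 : (u : V) ≠ b0 := fun h => u.2.2 (h ▸ hb0)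
    have e2 : (v : V) ≠ b0 := fun h => v.2.2 (h ▸ hb0)
    rcases hclaw a0 u v b0 (cA u hu a0 ha0).symm (cA v hv a0 ha0).symm hab
      (nes n) e1 e2 with h | h | h
    · exact m h
    · exact hnbu ⟨b0, hb0, h⟩
    · exact hnbv ⟨b0, hb0, h⟩
  have H2B : ∀ u v : {v : V // v ∉ A ∧ v ∉ B},
      (∃ x ∈ B, G.Adj (u : V) x) → (∃ x ∈ B, G.Adj (v : V) x) →
      ¬(∃ x ∈ A, G.Adj (u : V) x) → ¬(∃ x ∈ A, G.Adj (v : V) x) →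
      ¬u = v → ¬G.Adj (u : V) v → False := by
    intro u v hu hv hnau hnav n m
    obtain ⟨b0, hb0, -⟩ := id hu
    obtain ⟨a0, ha0, hab⟩ := (hB b0 hb0).1
    have e1 : (u : V) ≠ a0 := fun h => u.2.1 (h ▸ ha0)
    have e2 : (v : V) ≠ a0 := fun h => v.2.1 (h ▸ ha0)
    rcases hclaw b0 u v a0 (cB u hu b0 hb0).symm (cB v hv b0 hb0).symm hab.symm
      (nes n) e1 e2 with h | h | h
    · exact m h
    · exact hnau ⟨a0, ha0, h⟩
    · exact hnav ⟨a0, ha0, h⟩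
  have H3 : ∀ u v : {v : V // v ∉ A ∧ v ∉ B},
      (∃ x ∈ A, G.Adj (u : V) x) → (∃ x ∈ B, G.Adj (u : V) x) → G.Adj (u : V) v →
      ¬(∃ x ∈ A, G.Adj (v : V) x) → ¬(∃ x ∈ B, G.Adj (v : V) x) → False := by
    intro u v hNAu hNBu hadj hnav hnbv
    obtain ⟨a0, ha0, -⟩ := id hNAu
    obtain ⟨b0, hb0, hnab⟩ := (hA a0 ha0).2
    have e1 : (v : V) ≠ a0 := fun h => v.2.1 (h ▸ ha0)
    have e2 : (v : V) ≠ b0 := fun h => v.2.2 (h ▸ hb0)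
    have e3 : a0 ≠ b0 := fun h => (Set.disjoint_left.mp hdisj ha0) (h ▸ hb0)
    rcases hclaw u v a0 b0 hadj (cA u hNAu a0 ha0) (cB u hNBu b0 hb0) e1 e2 e3 with h | h | h
    · exact hnav ⟨a0, ha0, h⟩
    · exact hnbv ⟨b0, hb0, h⟩
    · exact hnab h
  have H4 : ∀ u v w : {v : V // v ∉ A ∧ v ∉ B},
      (∃ x ∈ A, G.Adj (u : V) x) → G.Adj (u : V) v → G.Adj (u : V) w →
      ¬(∃ x ∈ A, G.Adj (v : V) x) → ¬(∃ x ∈ A, G.Adj (w : V) x) →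
      ¬v = w → ¬G.Adj (v : V) w → False := by
    intro u v w hu h1 h2 hnav hnaw n m
    obtain ⟨a0, ha0, -⟩ := id hu
    have e1 : (v : V) ≠ a0 := fun h => v.2.1 (h ▸ ha0)
    have e2 : (w : V) ≠ a0 := fun h => w.2.1 (h ▸ ha0)
    rcases hclaw u v w a0 h1 h2 (cA u hu a0 ha0) (nes n) e1 e2 with h | h | h
    · exact m h
    · exact hnav ⟨a0, ha0, h⟩
    · exact hnaw ⟨a0, ha0, h⟩
  have H4B : ∀ u v w : {v : V // v ∉ A ∧ v ∉ B},
      (∃ x ∈ B, G.Adj (u : V) x) → G.Adj (u : V) v → G.Adj (u : V) w →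
      ¬(∃ x ∈ B, G.Adj (v : V) x) → ¬(∃ x ∈ B, G.Adj (w : V) x) →
      ¬v = w → ¬G.Adj (v : V) w → False := by
    intro u v w hu h1 h2 hnbv hnbw n m
    obtain ⟨b0, hb0, -⟩ := id hu
    have e1 : (v : V) ≠ b0 := fun h => v.2.2 (h ▸ hb0)
    have e2 : (w : V) ≠ b0 := fun h => w.2.2 (h ▸ hb0)
    rcases hclaw u v w b0 h1 h2 (cB u hu b0 hb0) (nes n) e1 e2 with h | h | h
    · exact m h
    · exact hnbv ⟨b0, hb0, h⟩
    · exact hnbw ⟨b0, hb0, h⟩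
  -- main case analysis
  intro x p q r hxp hxq hxr hpq hpr hqr
  by_contra hcon
  push_neg at hcon
  obtain ⟨npq, npr, nqr⟩ := hcon
  rcases x with u | i <;> rcases p with v | j <;> rcases q with w | k <;> rcases r with y | l
  -- 1: center u; leaves v w y
  · rw [rwj_inl_inl] at hxp hxq hxr npq npr nqr
    simp only [ne_eq, Sum.inl.injEq] at hpq hpr hqr
    exact H5 u v w y hxp hxq hxr hpq hpr hqr npq npr nqr
  -- 2: center u; leaves v w (inr l)
  · rw [rwj_inl_inl] at hxp hxq npq
    rw [rwj_inl_inr] at hxr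
    simp only [rwj_inl_inr, not_or, not_and] at npr nqr
    simp only [ne_eq, Sum.inl.injEq] at hpq
    rcases hxr with ⟨hl, hu⟩ | ⟨hl, hu⟩
    · exact H4 u v w hu hxp hxq (npr.1 hl) (nqr.1 hl) hpq npq
    · exact H4B u v w hu hxp hxq (npr.2 hl) (nqr.2 hl) hpq npq
  -- 3: center u; leaves v (inr k) y
  · rw [rwj_inl_inl] at hxp hxr npr
    rw [rwj_inl_inr] at hxq
    simp only [rwj_inl_inr, rwj_inr_inl, not_or, not_and] at npq nqr
    simp only [ne_eq, Sum.inl.injEq] at hpr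
    rcases hxq with ⟨hk, hu⟩ | ⟨hk, hu⟩
    · exact H4 u v y hu hxp hxr (npq.1 hk) (nqr.1 hk) hpr npr
    · exact H4B u v y hu hxp hxr (npq.2 hk) (nqr.2 hk) hpr npr
  -- 5: center u; leaves v (inr k) (inr l)
  · rw [rwj_inl_inl] at hxp
    rw [rwj_inl_inr] at hxq hxr
    rw [rwj_inr_inr] at nqr
    simp only [rwj_inl_inr, not_or, not_and] at npq npr
    simp only [ne_eq, Sum.inr.injEq] at hqr
    rcases hxq with ⟨hk, hu1⟩ | ⟨hk, hu1⟩ <;> rcases hxr with ⟨hl, hu2⟩ | ⟨hl, hu2⟩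
    · exact nqr (Psame k l hqr (Or.inl ⟨hk, hl⟩))
    · exact H3 u v hu1 hu2 hxp (npq.1 hk) (npr.2 hl)
    · exact H3 u v hu2 hu1 hxp (npr.1 hl) (npq.2 hk)
    · exact nqr (Psame k l hqr (Or.inr ⟨hk, hl⟩))
  -- 4: center u; leaves (inr j) w y
  · rw [rwj_inl_inl] at hxq hxr nqr
    rw [rwj_inl_inr] at hxp
    simp only [rwj_inr_inl, not_or, not_and] at npq npr
    simp only [ne_eq, Sum.inl.injEq] at hqr
    rcases hxp with ⟨hj, hu⟩ | ⟨hj, hu⟩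
    · exact H4 u w y hu hxq hxr (npq.1 hj) (npr.1 hj) hqr nqr
    · exact H4B u w y hu hxq hxr (npq.2 hj) (npr.2 hj) hqr nqr
  -- 6: center u; leaves (inr j) w (inr l)
  · rw [rwj_inl_inl] at hxq
    rw [rwj_inl_inr] at hxp hxr
    rw [rwj_inr_inr] at npr
    simp only [rwj_inr_inl, rwj_inl_inr, not_or, not_and] at npq nqr
    simp only [ne_eq, Sum.inr.injEq] at hpr
    rcases hxp with ⟨hj, hu1⟩ | ⟨hj, hu1⟩ <;> rcases hxr with ⟨hl, hu2⟩ | ⟨hl, hu2⟩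
    · exact npr (Psame j l hpr (Or.inl ⟨hj, hl⟩))
    · exact H3 u w hu1 hu2 hxq (npq.1 hj) (nqr.2 hl)
    · exact H3 u w hu2 hu1 hxq (nqr.1 hl) (npq.2 hj)
    · exact npr (Psame j l hpr (Or.inr ⟨hj, hl⟩))
  -- 7: center u; leaves (inr j) (inr k) y
  · rw [rwj_inl_inl] at hxr
    rw [rwj_inl_inr] at hxp hxq
    rw [rwj_inr_inr] at npq
    simp only [rwj_inr_inl, not_or, not_and] at npr nqr
    simp only [ne_eq, Sum.inr.injEq] at hpq
    rcases hxp with ⟨hj, hu1⟩ | ⟨hj, hu1⟩ <;> rcases hxq with ⟨hk, hu2⟩ | ⟨hk, hu2⟩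
    · exact npq (Psame j k hpq (Or.inl ⟨hj, hk⟩))
    · exact H3 u y hu1 hu2 hxr (npr.1 hj) (nqr.2 hk)
    · exact H3 u y hu2 hu1 hxr (nqr.1 hk) (npr.2 hj)
    · exact npq (Psame j k hpq (Or.inr ⟨hj, hk⟩))
  -- 8: center u; leaves (inr j) (inr k) (inr l)
  · rw [rwj_inr_inr] at npq npr nqr
    simp only [ne_eq, Sum.inr.injEq] at hpq hpr hqr
    rcases T j k l hpq hpr hqr with h | h | h
    exacts [npq h, npr h, nqr h]
  -- 9: center (inr i); leaves v w y
  · simp only [rwj_inr_inl] at hxp hxq hxr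
    rw [rwj_inl_inl] at npq npr nqr
    simp only [ne_eq, Sum.inl.injEq] at hpq hpr hqr
    rcases hxp with ⟨hi, h1⟩ | ⟨hi, h1⟩ <;> rcases hxq with ⟨hi2, h2⟩ | ⟨hi2, h2⟩ <;>
      rcases hxr with ⟨hi3, h3⟩ | ⟨hi3, h3⟩
    · exact H1 v w y h1 h2 h3 hpq hpr hqr npq npr nqr
    · exact hABf i hi hi3
    · exact hABf i hi hi2
    · exact hABf i hi hi2
    · exact hABf i hi2 hi
    · exact hABf i hi2 hi
    · exact hABf i hi3 hi
    · exact H1B v w y h1 h2 h3 hpq hpr hqr npq npr nqr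
  -- 10: center (inr i); leaves v w (inr l)
  · rw [rwj_inl_inl] at npq
    simp only [rwj_inr_inl] at hxp hxq
    rw [rwj_inr_inr] at hxr
    simp only [rwj_inl_inr, not_or, not_and] at npr nqr
    simp only [ne_eq, Sum.inl.injEq] at hpq
    rcases hxp with ⟨hi, h1⟩ | ⟨hi, h1⟩ <;> rcases hxq with ⟨hi2, h2⟩ | ⟨hi2, h2⟩
    · rcases Kcl l with hl | hl
      · exact (npr.1 hl) h1
      · exact H2 v w h1 h2 (npr.2 hl) (nqr.2 hl) hpq npq
    · exact hABf i hi hi2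
    · exact hABf i hi2 hi
    · rcases Kcl l with hl | hl
      · exact H2B v w h1 h2 (npr.1 hl) (nqr.1 hl) hpq npq
      · exact (npr.2 hl) h1
  -- 11: center (inr i); leaves v (inr k) y
  · rw [rwj_inl_inl] at npr
    simp only [rwj_inr_inl] at hxp hxr
    rw [rwj_inr_inr] at hxq
    simp only [rwj_inl_inr, rwj_inr_inl, not_or, not_and] at npq nqr
    simp only [ne_eq, Sum.inl.injEq] at hpr
    rcases hxp with ⟨hi, h1⟩ | ⟨hi, h1⟩ <;> rcases hxr with ⟨hi2, h2⟩ | ⟨hi2, h2⟩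
    · rcases Kcl k with hk | hk
      · exact (npq.1 hk) h1
      · exact H2 v y h1 h2 (npq.2 hk) (nqr.2 hk) hpr npr
    · exact hABf i hi hi2
    · exact hABf i hi2 hi
    · rcases Kcl k with hk | hk
      · exact H2B v y h1 h2 (npq.1 hk) (nqr.1 hk) hpr npr
      · exact (npq.2 hk) h1
  -- 12: center (inr i); leaves v (inr k) (inr l)
  · rw [rwj_inr_inr] at hxq hxr
    simp only [rwj_inr_inl] at hxp
    simp only [rwj_inl_inr, not_or, not_and] at npq npr
    simp only [ne_eq, Sum.inr.injEq] at hqr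
    rcases hxp with ⟨hi, h1⟩ | ⟨hi, h1⟩
    · rcases (K3 i k l hxq hxr hqr).1 hi with hk | hl
      · exact (npq.1 hk) h1
      · exact (npr.1 hl) h1
    · rcases (K3 i k l hxq hxr hqr).2 hi with hk | hl
      · exact (npq.2 hk) h1
      · exact (npr.2 hl) h1
  -- 13: center (inr i); leaves (inr j) w y
  · rw [rwj_inl_inl] at nqr
    simp only [rwj_inr_inl] at hxq hxr
    rw [rwj_inr_inr] at hxp
    simp only [rwj_inr_inl, not_or, not_and] at npq npr
    simp only [ne_eq, Sum.inl.injEq] at hqr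
    rcases hxq with ⟨hi, h1⟩ | ⟨hi, h1⟩ <;> rcases hxr with ⟨hi2, h2⟩ | ⟨hi2, h2⟩
    · rcases Kcl j with hj | hj
      · exact (npq.1 hj) h1
      · exact H2 w y h1 h2 (npq.2 hj) (npr.2 hj) hqr nqr
    · exact hABf i hi hi2
    · exact hABf i hi2 hi
    · rcases Kcl j with hj | hj
      · exact H2B w y h1 h2 (npq.1 hj) (npr.1 hj) hqr nqr
      · exact (npq.2 hj) h1
  -- 14: center (inr i); leaves (inr j) w (inr l)
  · rw [rwj_inr_inr] at hxp hxr
    simp only [rwj_inr_inl] at hxq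
    simp only [rwj_inr_inl, rwj_inl_inr, not_or, not_and] at npq nqr
    simp only [ne_eq, Sum.inr.injEq] at hpr
    rcases hxq with ⟨hi, h1⟩ | ⟨hi, h1⟩
    · rcases (K3 i j l hxp hxr hpr).1 hi with hj | hl
      · exact (npq.1 hj) h1
      · exact (nqr.1 hl) h1
    · rcases (K3 i j l hxp hxr hpr).2 hi with hj | hl
      · exact (npq.2 hj) h1
      · exact (nqr.2 hl) h1
  -- 15: center (inr i); leaves (inr j) (inr k) y
  · rw [rwj_inr_inr] at hxp hxq
    simp only [rwj_inr_inl] at hxr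
    simp only [rwj_inr_inl, not_or, not_and] at npr nqr
    simp only [ne_eq, Sum.inr.injEq] at hpq
    rcases hxr with ⟨hi, h1⟩ | ⟨hi, h1⟩
    · rcases (K3 i j k hxp hxq hpq).1 hi with hj | hk
      · exact (npr.1 hj) h1
      · exact (nqr.1 hk) h1
    · rcases (K3 i j k hxp hxq hpq).2 hi with hj | hk
      · exact (npr.2 hj) h1
      · exact (nqr.2 hk) h1
  -- 16: center (inr i); leaves (inr j) (inr k) (inr l)
  · rw [rwj_inr_inr] at npq npr nqr
    simp only [ne_eq, Sum.inr.injEq] at hpq hpr hqr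
    rcases T j k l hpq hpr hqr with h | h | h
    exacts [npq h, npr h, nqr h]
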